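/- arXiv:2605.13891 — 5 statements merged into one kernel-verified Lean document; each statement's English description precedes it below -/
import Mathlib

section
/- Let n ≥ 1, let x ∈ ℂⁿ be nonzero and y ∈ ℂⁿ. Then (a) there exists a Hermitian matrix H ∈ ℂ^{n×n} with Hx = y if and only if x*y is real (Im(x*y) = 0); and (b) if x*y is real, then every Hermitian H with Hx = y satisfies ‖H‖ ≥ ‖y‖/‖x‖, and there exists a Hermitian H with Hx = y and ‖H‖ = ‖y‖/‖x‖; that is, min{‖H‖ : H ∈ ℂ^{n×n}, H* = H, Hx = y} = ‖y‖/‖x‖. -/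
open Matrix
open scoped ComplexOrder ENNReal

noncomputable section

/-- Euclidean norm of a complex vector. -/
def vecNorm {ι : Type*} [Fintype ι] (x : ι → ℂ) : ℝ :=
  Real.sqrt (∑ i, Complex.normSq (x i))

/-- Spectral norm (largest singular value; the ℓ²→ℓ² operator norm). -/
def specNorm {ι κ : Type*} [Fintype ι] [Fintype κ] [DecidableEq κ] (A : Matrix ι κ ℂ) : ℝ :=
  ‖(Matrix.toEuclideanLin A).toContinuousLinearMap‖


set_option synthInstance.maxHeartbeats 1000000 in
variable {n : ℕ}

set_option synthInstance.maxHeartbeats 1000000 in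
lemma vecNorm_eq_norm (a : Fin n → ℂ) : vecNorm a = ‖(WithLp.equiv 2 (Fin n → ℂ)).symm a‖ := by
  rw [EuclideanSpace.norm_eq]
  simp [vecNorm, Complex.normSq_eq_norm_sq]

set_option synthInstance.maxHeartbeats 1000000 in
lemma specNorm_apply_le (A : Matrix (Fin n) (Fin n) ℂ) (a : Fin n → ℂ) :
    vecNorm (A *ᵥ a) ≤ specNorm A * vecNorm a := by
  have h := ((Matrix.toEuclideanLin A).toContinuousLinearMap).le_opNorm
    ((WithLp.equiv 2 (Fin n → ℂ)).symm a)
  rw [LinearMap.coe_toContinuousLinearMap', WithLp.equiv_symm_apply, Matrix.toEuclideanLin_apply_piLp_toLp] at h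
  simpa [vecNorm_eq_norm, specNorm] using h

set_option synthInstance.maxHeartbeats 1000000 in
lemma specNorm_le_of_bound (A : Matrix (Fin n) (Fin n) ℂ) (c : ℝ) (hc : 0 ≤ c)
    (h : ∀ a : Fin n → ℂ, vecNorm (A *ᵥ a) ≤ c * vecNorm a) : specNorm A ≤ c := by
  refine ContinuousLinearMap.opNorm_le_bound _ hc fun v => ?_
  have h2 := h (WithLp.equiv 2 (Fin n → ℂ) v)
  rw [vecNorm_eq_norm, vecNorm_eq_norm, (WithLp.equiv 2 (Fin n → ℂ)).symm_apply_apply] at h2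
  simpa [LinearMap.coe_toContinuousLinearMap', Matrix.toEuclideanLin_apply] using h2

lemma vecNorm_nonneg (a : Fin n → ℂ) : 0 ≤ vecNorm a := Real.sqrt_nonneg _

lemma vecNorm_pos (a : Fin n → ℂ) (ha : a ≠ 0) : 0 < vecNorm a := by
  rw [vecNorm_eq_norm]
  rw [norm_pos_iff]
  intro h
  exact ha (by funext i; exact congrFun ((WithLp.equiv 2 (Fin n → ℂ)).symm.injective (by simpa using h)) i)

lemma star_dot_self (a : Fin n → ℂ) : star a ⬝ᵥ a = ((∑ i, Complex.normSq (a i) : ℝ) : ℂ) := by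
  simp [dotProduct, Complex.normSq_eq_conj_mul_self]

lemma vecNorm_sq (a : Fin n → ℂ) : (vecNorm a) ^ 2 = ∑ i, Complex.normSq (a i) := by
  rw [vecNorm, Real.sq_sqrt]
  exact Finset.sum_nonneg fun i _ => Complex.normSq_nonneg _

set_option synthInstance.maxHeartbeats 1000000 in
lemma vecNorm_mulVec_unitary (U : Matrix (Fin n) (Fin n) ℂ) (hU : U.IsHermitian)
    (hU2 : U * U = 1) (a : Fin n → ℂ) : vecNorm (U *ᵥ a) = vecNorm a := by
  have key : star (U *ᵥ a) ⬝ᵥ (U *ᵥ a) = star a ⬝ᵥ a := by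
    rw [Matrix.star_mulVec, ← Matrix.dotProduct_mulVec, Matrix.mulVec_mulVec, hU.eq, hU2,
      Matrix.one_mulVec]
  rw [star_dot_self, star_dot_self] at key
  have : (∑ i, Complex.normSq ((U *ᵥ a) i)) = ∑ i, Complex.normSq (a i) :=
    Complex.ofReal_injective key
  rw [vecNorm, vecNorm, this]

set_option synthInstance.maxHeartbeats 1000000 in
lemma specNorm_unitary (U : Matrix (Fin n) (Fin n) ℂ) (hU : U.IsHermitian)
    (hU2 : U * U = 1) (z : Fin n → ℂ) (hz : z ≠ 0) : specNorm U = 1 := by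
  refine le_antisymm (specNorm_le_of_bound U 1 zero_le_one fun a => by
    rw [vecNorm_mulVec_unitary U hU hU2, one_mul]) ?_
  have h := specNorm_apply_le U z
  rw [vecNorm_mulVec_unitary U hU hU2] at h
  have hp := vecNorm_pos z hz
  nlinarith

set_option synthInstance.maxHeartbeats 1000000 in
lemma specNorm_smul_real (c : ℝ) (hc : 0 ≤ c) (A : Matrix (Fin n) (Fin n) ℂ) :
    specNorm ((c : ℂ) • A) = c * specNorm A := by
  unfold specNorm
  rw [_root_.map_smul, _root_.map_smul, norm_smul ((c:ℂ)) (LinearMap.toContinuousLinearMap (toEuclideanLin A))]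
  simp [abs_of_nonneg hc]

set_option synthInstance.maxHeartbeats 1000000 in
lemma specNorm_zero : specNorm (0 : Matrix (Fin n) (Fin n) ℂ) = 0 := by
  unfold specNorm
  rw [map_zero, map_zero, norm_zero]

lemma vecMulVec_star_hermitian (v : Fin n → ℂ) : (vecMulVec v (star v)).IsHermitian := by
  ext i j
  simp [Matrix.conjTranspose_apply, Matrix.vecMulVec_apply, mul_comm]

lemma vecMulVec_mulVec' (v w z : Fin n → ℂ) :
    vecMulVec v w *ᵥ z = (w ⬝ᵥ z) • v := by
  funext i
  simp [Matrix.mulVec, dotProduct, Matrix.vecMulVec_apply, Finset.mul_sum, mul_comm,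
    mul_left_comm]

lemma vecMulVec_sq (v : Fin n → ℂ) :
    vecMulVec v (star v) * vecMulVec v (star v) = (star v ⬝ᵥ v) • vecMulVec v (star v) := by
  ext i j
  simp only [Matrix.mul_apply, Matrix.vecMulVec_apply, Matrix.smul_apply, dotProduct,
    smul_eq_mul, Finset.sum_mul, Finset.mul_sum]
  apply Finset.sum_congr rfl
  intro k _
  ring

section Householder
variable (v : Fin n → ℂ)

lemma hh_herm : ((1 : Matrix (Fin n) (Fin n) ℂ)
    - (((2 / ∑ i, Complex.normSq (v i) : ℝ)) : ℂ) • vecMulVec v (star v)).IsHermitian := by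
  rw [Matrix.IsHermitian, Matrix.conjTranspose_sub, Matrix.conjTranspose_smul,
    Matrix.conjTranspose_one, (vecMulVec_star_hermitian v).eq]
  simp [Complex.star_def, Complex.conj_ofReal]

lemma hh_sq (hv : (∑ i, Complex.normSq (v i)) ≠ 0) :
    ((1 : Matrix (Fin n) (Fin n) ℂ)
      - (((2 / ∑ i, Complex.normSq (v i) : ℝ)) : ℂ) • vecMulVec v (star v)) *
    ((1 : Matrix (Fin n) (Fin n) ℂ)
      - (((2 / ∑ i, Complex.normSq (v i) : ℝ)) : ℂ) • vecMulVec v (star v)) = 1 := by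
  set ν : ℝ := ∑ i, Complex.normSq (v i) with hν
  set a : ℂ := ((2 / ν : ℝ) : ℂ) with ha
  set M : Matrix (Fin n) (Fin n) ℂ := vecMulVec v (star v) with hM
  have hsq : (a • M) * (a • M) = (2 * a) • M := by
    rw [Matrix.smul_mul, Matrix.mul_smul, vecMulVec_sq, star_dot_self, ← hν, smul_smul, smul_smul]
    congr 1
    have hv' : (ν : ℂ) ≠ 0 := by exact_mod_cast hv
    rw [ha]
    push_cast
    field_simp
  rw [sub_mul, mul_sub, mul_sub, one_mul, mul_one, hsq, mul_smul, two_smul, one_mul]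
  abel

lemma hh_mulVec (z : Fin n → ℂ) :
    ((1 : Matrix (Fin n) (Fin n) ℂ)
      - (((2 / ∑ i, Complex.normSq (v i) : ℝ)) : ℂ) • vecMulVec v (star v)) *ᵥ z
    = z - ((((2 / ∑ i, Complex.normSq (v i) : ℝ)) : ℂ) * (star v ⬝ᵥ z)) • v := by
  rw [Matrix.sub_mulVec, Matrix.one_mulVec, Matrix.smul_mulVec, vecMulVec_mulVec',
    smul_smul]

end Householder

set_option maxHeartbeats 1000000 in
set_option synthInstance.maxHeartbeats 1000000 in
lemma exists_opt (x y : Fin n → ℂ) (hx : x ≠ 0) (him : (star x ⬝ᵥ y).im = 0) :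
    ∃ H : Matrix (Fin n) (Fin n) ℂ,
      H.IsHermitian ∧ H *ᵥ x = y ∧ specNorm H = vecNorm y / vecNorm x := by
  by_cases hy : y = 0
  · subst hy
    refine ⟨0, Matrix.isHermitian_zero, by simp [Matrix.zero_mulVec], ?_⟩
    rw [specNorm_zero]
    have : vecNorm (0 : Fin n → ℂ) = 0 := by simp [vecNorm]
    rw [this, zero_div]
  · have hxpos := vecNorm_pos x hx
    have hypos := vecNorm_pos y hy
    set c : ℝ := vecNorm y / vecNorm x with hc
    have hcpos : 0 < c := div_pos hypos hxpos
    have hcC : (c : ℂ) ≠ 0 := by exact_mod_cast hcpos.ne'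
    set w : Fin n → ℂ := fun i => y i / (c : ℂ) with hw
    -- key scalar facts
    have hcw : ∀ i, (c : ℂ) * w i = y i := fun i => by
      rw [hw]; field_simp
    have hsumw : (∑ i, Complex.normSq (w i)) = ∑ i, Complex.normSq (x i) := by
      have h1 : ∀ i, Complex.normSq (w i) = Complex.normSq (y i) / c ^ 2 := fun i => by
        rw [hw]; simp [Complex.normSq_div, Complex.normSq_ofReal, sq]
      simp only [h1, ← Finset.sum_div]
      rw [← vecNorm_sq, ← vecNorm_sq, hc]
      field_simp
    have hxw : star x ⬝ᵥ w = ((star x ⬝ᵥ y) / (c : ℂ)) := by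
      simp only [dotProduct, hw, Pi.star_apply]
      rw [Finset.sum_div]
      exact Finset.sum_congr rfl fun i _ => by ring
    have hxw_im : ((star x ⬝ᵥ w) : ℂ).im = 0 := by
      rw [hxw, Complex.div_ofReal_im, him, zero_div]
    have hwx : star w ⬝ᵥ x = star x ⬝ᵥ w := by
      rw [Matrix.star_dotProduct, Complex.star_def,
        Complex.conj_eq_iff_im.mpr hxw_im]
    -- find unitary hermitian U with U x = w
    have hU : ∃ U : Matrix (Fin n) (Fin n) ℂ, U.IsHermitian ∧ U * U = 1 ∧ U *ᵥ x = w := by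
      by_cases hvx : x = w
      · exact ⟨1, Matrix.isHermitian_one, one_mul 1, by rw [Matrix.one_mulVec, hvx]⟩
      · set v : Fin n → ℂ := x - w with hv
        have hvne : v ≠ 0 := sub_ne_zero.mpr hvx
        set ν : ℝ := ∑ i, Complex.normSq (v i) with hν
        have hνpos : 0 < ν := by
          have h := vecNorm_pos v hvne
          rw [hν, ← vecNorm_sq]
          positivity
        have hνC : (ν : ℂ) ≠ 0 := by exact_mod_cast hνpos.ne'
        have hkey : star v ⬝ᵥ x = (ν : ℂ) / 2 := by
          have hνeq : (ν : ℂ) = star v ⬝ᵥ v := (star_dot_self v).symm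
          have hsw : star w ⬝ᵥ w = star x ⬝ᵥ x := by
            rw [star_dot_self, star_dot_self, hsumw]
          have hexp : star v ⬝ᵥ v = star x ⬝ᵥ x - star x ⬝ᵥ w - star w ⬝ᵥ x + star w ⬝ᵥ w := by
            rw [hv]
            have : star (x - w) = star x - star w := by funext i; simp
            rw [this, sub_dotProduct, dotProduct_sub, dotProduct_sub]
            ring
          have hvx' : star v ⬝ᵥ x = star x ⬝ᵥ x - star w ⬝ᵥ x := by
            rw [hv]
            have : star (x - w) = star x - star w := by funext i; simp
            rw [this, sub_dotProduct]
          rw [hvx', hνeq, hexp, hsw, hwx]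
          ring
        refine ⟨(1 : Matrix (Fin n) (Fin n) ℂ)
            - (((2 / ν : ℝ)) : ℂ) • vecMulVec v (star v),
          hh_herm v, hh_sq v hνpos.ne', ?_⟩
        rw [hh_mulVec, hkey]
        have : (((2 / ν : ℝ)) : ℂ) * ((ν : ℂ) / 2) = 1 := by
          push_cast
          field_simp
        rw [this, one_smul, hv]
        abel
    obtain ⟨U, hUh, hU2, hUx⟩ := hU
    refine ⟨(c : ℂ) • U, ?_, ?_, ?_⟩
    · rw [Matrix.IsHermitian, Matrix.conjTranspose_smul, hUh.eq]
      simp [Complex.star_def, Complex.conj_ofReal]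
    · rw [Matrix.smul_mulVec, hUx]
      funext i
      simpa using hcw i
    · rw [specNorm_smul_real c hcpos.le, specNorm_unitary U hUh hU2 x hx, mul_one]

set_option maxHeartbeats 1000000 in
set_option synthInstance.maxHeartbeats 1000000 in
set_option linter.unusedVariables false in
/-- Hermitian mapping problem: for `x ≠ 0`, there is a Hermitian `H` with
`H x = y` iff `x* y` is real, and in that case the minimum of `‖H‖` (spectral norm) over all
Hermitian `H` with `H x = y` is `‖y‖ / ‖x‖`. -/
theorem hermitian_mapping {n : ℕ} (hn : 1 ≤ n) (x y : Fin n → ℂ) (hx : x ≠ 0) :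
    ((∃ H : Matrix (Fin n) (Fin n) ℂ, H.IsHermitian ∧ H *ᵥ x = y) ↔ (star x ⬝ᵥ y).im = 0) ∧
    ((star x ⬝ᵥ y).im = 0 →
      IsLeast {c : ℝ | ∃ H : Matrix (Fin n) (Fin n) ℂ,
          H.IsHermitian ∧ H *ᵥ x = y ∧ specNorm H = c}
        (vecNorm y / vecNorm x)) := by
  have hxpos := vecNorm_pos x hx
  constructor
  · constructor
    · rintro ⟨H, hH, hHx⟩
      rw [← hHx]
      have hstar : star (star x ⬝ᵥ (H *ᵥ x)) = star x ⬝ᵥ (H *ᵥ x) := by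
        conv_lhs => rw [← Matrix.star_dotProduct (H *ᵥ x) x]
        rw [Matrix.star_mulVec, ← Matrix.dotProduct_mulVec, hH.eq]
      rw [Complex.star_def] at hstar
      exact Complex.conj_eq_iff_im.mp hstar
    · intro him
      obtain ⟨H, h1, h2, _⟩ := exists_opt x y hx him
      exact ⟨H, h1, h2⟩
  · intro him
    constructor
    · obtain ⟨H, h1, h2, h3⟩ := exists_opt x y hx him
      exact ⟨H, h1, h2, h3⟩
    · rintro c ⟨H, hH, hHx, rfl⟩
      have h := specNorm_apply_le H x
      rw [hHx] at h
      rw [div_le_iff₀ hxpos]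
      exact h
end
end

section
/- Let (E,J,R) be a dH triple and suppose the pencil P(λ) = λE − (J − R) is regular, i.e. there exists μ ∈ ℂ with det(μE − (J − R)) ≠ 0. Then every λ₀ ∈ ℂ with det(λ₀E − (J − R)) = 0 satisfies Re(λ₀) ≤ 0. -/
open Matrix
open scoped ComplexOrder

/-- For a dH triple `(E, J, R)` whose pencil `λE − (J − R)` is regular, every
finite eigenvalue `λ₀` (i.e. `det(λ₀E − (J − R)) = 0`) satisfies `Re λ₀ ≤ 0`. -/
theorem dH_eigenvalues_left_halfplane {n : ℕ} (E J R : Matrix (Fin n) (Fin n) ℂ)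
    (hE : E.PosSemidef) (hJ : Jᴴ = -J) (hR : R.PosSemidef)
    (hreg : ∃ μ : ℂ, Matrix.det (μ • E - (J - R)) ≠ 0) :
    ∀ lam : ℂ, Matrix.det (lam • E - (J - R)) = 0 → lam.re ≤ 0 := by
  intro lam hdet
  obtain ⟨v, hv, hveq⟩ := (Matrix.exists_mulVec_eq_zero_iff).mpr hdet
  -- basic equation: lam • (E *ᵥ v) = (J - R) *ᵥ v
  have key : lam • (E *ᵥ v) = (J - R) *ᵥ v := by
    have := hveq
    rw [Matrix.sub_mulVec, Matrix.smul_mulVec, sub_eq_zero] at this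
    exact this
  set e : ℂ := star v ⬝ᵥ E *ᵥ v with he
  set r : ℂ := star v ⬝ᵥ R *ᵥ v with hr
  have he0 : 0 ≤ e := hE.dotProduct_mulVec_nonneg v
  have hr0 : 0 ≤ r := hR.dotProduct_mulVec_nonneg v
  have heim : e.im = 0 := by
    have := (Complex.le_def.mp he0).2; simpa using this.symm
  have here : 0 ≤ e.re := (Complex.le_def.mp he0).1
  have hrre : 0 ≤ r.re := (Complex.le_def.mp hr0).1
  have hrim : r.im = 0 := by
    have := (Complex.le_def.mp hr0).2; simpa using this.symm
  -- j is purely imaginary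
  have hjstar : star (star v ⬝ᵥ J *ᵥ v) = -(star v ⬝ᵥ J *ᵥ v) := by
    conv_lhs => rw [star_dotProduct, star_star, Matrix.star_mulVec, hJ]
    rw [Matrix.vecMul_neg, neg_dotProduct, ← Matrix.dotProduct_mulVec]
  have hjre : (star v ⬝ᵥ J *ᵥ v).re = 0 := by
    have := congrArg Complex.re hjstar
    simp only [Complex.star_def, Complex.conj_re, Complex.neg_re] at this
    linarith
  -- main scalar equation
  have hscal : lam * e = (star v ⬝ᵥ J *ᵥ v) - r := by
    have := congrArg (fun w => star v ⬝ᵥ w) key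
    simpa [Matrix.sub_mulVec, dotProduct_sub, dotProduct_smul, smul_eq_mul, ← he, ← hr]
      using this
  have hre : lam.re * e.re = -r.re := by
    have := congrArg Complex.re hscal
    simp only [Complex.mul_re, Complex.sub_re, heim, hjre, mul_zero, sub_zero, zero_sub] at this
    linarith
  rcases lt_or_eq_of_le here with hpos | hzero
  · nlinarith
  · -- e = 0, hence E *ᵥ v = 0
    exfalso
    have he00 : e = 0 := Complex.ext hzero.symm heim
    have hEv : E *ᵥ v = 0 := (hE.dotProduct_mulVec_zero_iff v).mp (by rw [← he, he00])
    have hJRv : (J - R) *ᵥ v = 0 := by rw [← key, hEv, smul_zero]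
    -- then r = j
    have hjr : star v ⬝ᵥ J *ᵥ v = r := by
      have := congrArg (fun w => star v ⬝ᵥ w) hJRv
      simp only [Matrix.sub_mulVec, dotProduct_sub, ← hr, dotProduct_zero,
        sub_eq_zero] at this
      exact this
    have hr00 : r = 0 := Complex.ext (by rw [← hjr]; exact hjre) hrim
    have hRv : R *ᵥ v = 0 := (hR.dotProduct_mulVec_zero_iff v).mp (by rw [← hr, hr00])
    have hJv : J *ᵥ v = 0 := by
      have := hJRv
      rw [Matrix.sub_mulVec, hRv, sub_zero] at this
      exact this
    obtain ⟨μ, hμ⟩ := hreg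
    apply hμ
    rw [← Matrix.exists_mulVec_eq_zero_iff]
    exact ⟨v, hv, by rw [Matrix.sub_mulVec, Matrix.smul_mulVec, hEv, Matrix.sub_mulVec,
      hRv, hJv, smul_zero]; simp⟩
end

section
/- Let (E,J,R) be a dH triple, let ω ∈ ℝ be such that det(iωE − J) ≠ 0, and set M := (iωE − J)⁻¹. Let ΔE ∈ ℂ^{n×n} be Hermitian with E + ΔE positive semidefinite, ΔJ ∈ ℂ^{n×n} skew-Hermitian, and ΔR ∈ ℂ^{n×n} Hermitian with R + ΔR positive semidefinite. Then the following are equivalent: (1) det(iω(E+ΔE) − (J+ΔJ) + (R+ΔR)) = 0; (2) there exists a nonzero x ∈ ℂⁿ with (R+ΔR)x = 0 and (iω(E+ΔE) − (J+ΔJ))x = 0; (3) there exist v_E, v_J ∈ ℂⁿ such that v := −iω v_E + v_J ≠ 0, ΔR M v = −R M v, ΔE M v = v_E, and ΔJ M v = v_J. -/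
open Matrix
open scoped ComplexOrder

noncomputable section

/-- `M(ω) = (iωE − J)⁻¹`. -/
def Mmat {n : ℕ} (E J : Matrix (Fin n) (Fin n) ℂ) (ω : ℝ) : Matrix (Fin n) (Fin n) ℂ :=
  ((Complex.I * ω) • E - J)⁻¹

/-- Lemma on equivalent characterizations of `iω` being an eigenvalue of a
structurally perturbed dH pencil. -/
theorem dH_imaginary_eigenvalue_tfae {n : ℕ} (E J R ΔE ΔJ ΔR : Matrix (Fin n) (Fin n) ℂ)
    (hE : E.PosSemidef) (hJ : Jᴴ = -J) (hR : R.PosSemidef)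
    (hΔE : ΔE.IsHermitian) (hEp : (E + ΔE).PosSemidef)
    (hΔJ : ΔJᴴ = -ΔJ)
    (hΔR : ΔR.IsHermitian) (hRp : (R + ΔR).PosSemidef)
    (ω : ℝ) (hM : Matrix.det ((Complex.I * ω) • E - J) ≠ 0) :
    (Matrix.det ((Complex.I * ω) • (E + ΔE) - (J + ΔJ) + (R + ΔR)) = 0 ↔
      ∃ x : Fin n → ℂ, x ≠ 0 ∧ (R + ΔR) *ᵥ x = 0 ∧
        ((Complex.I * ω) • (E + ΔE) - (J + ΔJ)) *ᵥ x = 0) ∧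
    ((∃ x : Fin n → ℂ, x ≠ 0 ∧ (R + ΔR) *ᵥ x = 0 ∧
        ((Complex.I * ω) • (E + ΔE) - (J + ΔJ)) *ᵥ x = 0) ↔
      ∃ vE vJ : Fin n → ℂ,
        (-(Complex.I * ω)) • vE + vJ ≠ 0 ∧
        ΔR *ᵥ Mmat E J ω *ᵥ ((-(Complex.I * ω)) • vE + vJ) =
          -(R *ᵥ Mmat E J ω *ᵥ ((-(Complex.I * ω)) • vE + vJ)) ∧
        ΔE *ᵥ Mmat E J ω *ᵥ ((-(Complex.I * ω)) • vE + vJ) = vE ∧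
        ΔJ *ᵥ Mmat E J ω *ᵥ ((-(Complex.I * ω)) • vE + vJ) = vJ) := by
  classical
  set A : Matrix (Fin n) (Fin n) ℂ := (Complex.I * ω) • (E + ΔE) - (J + ΔJ) with hA
  set S : Matrix (Fin n) (Fin n) ℂ := R + ΔR with hS
  -- A is skew-Hermitian
  have hAsk : Aᴴ = -A := by
    have h1 : (E + ΔE)ᴴ = E + ΔE := hEp.1
    have hstar : star (Complex.I * (ω : ℂ)) = -(Complex.I * ω) := by
      simp [Complex.ext_iff]
    rw [hA, conjTranspose_sub, conjTranspose_smul, conjTranspose_add, conjTranspose_add,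
      hE.1, hΔE.eq, hJ, hΔJ, hstar]
    module
  constructor
  · -- det = 0 ↔ kernel vector
    rw [← Matrix.exists_mulVec_eq_zero_iff]
    constructor
    · rintro ⟨v, hv, hker⟩
      refine ⟨v, hv, ?_⟩
      have hsum : star v ⬝ᵥ A *ᵥ v + star v ⬝ᵥ S *ᵥ v = 0 := by
        have : star v ⬝ᵥ (A + S) *ᵥ v = 0 := by rw [hker, dotProduct_zero]
        rwa [add_mulVec, dotProduct_add] at this
      set a := star v ⬝ᵥ A *ᵥ v with ha
      set s := star v ⬝ᵥ S *ᵥ v with hs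
      have hconj : star a = -a := by
        have h1 : star a = star (A *ᵥ v) ⬝ᵥ v := by
          rw [ha, star_dotProduct, star_star]
        rw [h1, star_mulVec, ← dotProduct_mulVec, hAsk, neg_mulVec, dotProduct_neg, ha]
      have hsle : (0:ℂ) ≤ s := hRp.dotProduct_mulVec_nonneg v
      have hsim : s.im = 0 := by
        have := (Complex.le_def.mp hsle).2
        simpa using this.symm
      have hare : a.re = 0 := by
        have := congrArg Complex.re hconj
        simp only [Complex.neg_re] at this
        have h2 : a.re = -a.re := by
          simpa [Complex.conj_re] using this
        linarith
      have haeq : a = -s := by linear_combination hsum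
      have hs0 : s = 0 := by
        have hsre : s.re = 0 := by
          have := congrArg Complex.re haeq
          simp only [Complex.neg_re] at this
          linarith
        exact Complex.ext hsre hsim
      have hSv : S *ᵥ v = 0 := (hRp.dotProduct_mulVec_zero_iff v).mp hs0
      refine ⟨hSv, ?_⟩
      have : (A + S) *ᵥ v = 0 := hker
      rw [add_mulVec, hSv, add_zero] at this
      exact this
    · rintro ⟨x, hx, hSx, hAx⟩
      exact ⟨x, hx, by rw [add_mulVec, hAx, hSx, add_zero]⟩
  · -- kernel vector ↔ structured perturbation form
    have hinv1 : ((Complex.I * ω) • E - J) * Mmat E J ω = 1 := Matrix.mul_nonsing_inv _ hM.isUnit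
    have hinv2 : Mmat E J ω * ((Complex.I * ω) • E - J) = 1 := Matrix.nonsing_inv_mul _ hM.isUnit
    constructor
    · rintro ⟨x, hx, hSx, hAx⟩
      set v : Fin n → ℂ := ((Complex.I * ω) • E - J) *ᵥ x with hv
      have hxv : Mmat E J ω *ᵥ v = x := by
        rw [hv, mulVec_mulVec, hinv2, one_mulVec]
      have hveq : (-(Complex.I * ω)) • (ΔE *ᵥ x) + ΔJ *ᵥ x = v := by
        have : ((Complex.I * ω) • E - J) *ᵥ x + ((Complex.I * ω) • ΔE - ΔJ) *ᵥ x = 0 := by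
          rw [← add_mulVec, ← hAx]
          congr 1
          rw [hA, smul_add]
          abel
        rw [hv]
        have h2 := this
        simp only [sub_mulVec, smul_mulVec] at h2 ⊢
        rw [neg_smul, eq_neg_of_add_eq_zero_left h2]
        module
      refine ⟨ΔE *ᵥ x, ΔJ *ᵥ x, ?_, ?_, ?_, ?_⟩ <;> rw [hveq]
      · intro h0
        rw [h0, mulVec_zero] at hxv
        exact hx hxv.symm
      · rw [hxv]
        have := hSx
        rw [hS, add_mulVec] at this
        linear_combination (norm := module) this
      · rw [hxv]
      · rw [hxv]
    · rintro ⟨vE, vJ, hw, hRc, hEc, hJc⟩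
      set w : Fin n → ℂ := (-(Complex.I * ω)) • vE + vJ with hwdef
      set x : Fin n → ℂ := Mmat E J ω *ᵥ w with hxdef
      have hwx : ((Complex.I * ω) • E - J) *ᵥ x = w := by
        rw [hxdef, mulVec_mulVec, hinv1, one_mulVec]
      have hx0 : x ≠ 0 := by
        intro h0
        rw [h0, mulVec_zero] at hwx
        exact hw hwx.symm
      refine ⟨x, hx0, ?_, ?_⟩
      · rw [hS, add_mulVec, hRc]
        simp
      · have hexp : A *ᵥ x = ((Complex.I * ω) • E - J) *ᵥ x + ((Complex.I * ω) • ΔE - ΔJ) *ᵥ x := by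
          rw [← add_mulVec, hA]
          congr 1
          rw [smul_add]
          abel
        rw [hexp, hwx, sub_mulVec, smul_mulVec, hEc, hJc, hwdef, neg_smul]
        module
end
end

section
/- Let (E,J,R) be a dH triple. Then the pencil λE − (J − R) is regular, i.e. there exists λ ∈ ℂ with det(λE − (J − R)) ≠ 0, if and only if ker E ∩ ker J ∩ ker R = {0}, i.e. there is no nonzero x ∈ ℂⁿ with Ex = 0, Jx = 0, and Rx = 0. -/
open Matrix
open scoped ComplexOrder

/-- A dH pencil `λE − (J − R)` is regular iff `ker E ∩ ker J ∩ ker R = {0}`. -/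
theorem dH_pencil_regular_iff {n : ℕ} (E J R : Matrix (Fin n) (Fin n) ℂ)
    (hE : E.PosSemidef) (hJ : Jᴴ = -J) (hR : R.PosSemidef) :
    (∃ lam : ℂ, Matrix.det (lam • E - (J - R)) ≠ 0) ↔
    ¬ ∃ x : Fin n → ℂ, x ≠ 0 ∧ E *ᵥ x = 0 ∧ J *ᵥ x = 0 ∧ R *ᵥ x = 0 := by
  constructor
  · rintro ⟨lam, hdet⟩ ⟨x, hx, hEx, hJx, hRx⟩
    apply hdet
    rw [← Matrix.exists_mulVec_eq_zero_iff]
    exact ⟨x, hx, by simp [sub_mulVec, smul_mulVec, hEx, hJx, hRx]⟩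
  · intro h
    refine ⟨1, fun hdet => h ?_⟩
    obtain ⟨x, hx, hMx⟩ := Matrix.exists_mulVec_eq_zero_iff.mpr hdet
    -- M = E - (J - R), with M x = 0
    set a := star x ⬝ᵥ E *ᵥ x with ha
    set b := star x ⬝ᵥ R *ᵥ x with hb
    set c := star x ⬝ᵥ J *ᵥ x with hc
    have hare : 0 ≤ a := hE.dotProduct_mulVec_nonneg x
    have hbre : 0 ≤ b := hR.dotProduct_mulVec_nonneg x
    have hcim : c.re = 0 := by
      have h1 : star c = star (J *ᵥ x) ⬝ᵥ x := by
        rw [hc, Matrix.star_dotProduct, star_star]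
      have h2 : star c = -c := by
        rw [h1, Matrix.star_mulVec, ← Matrix.dotProduct_mulVec, hJ, Matrix.neg_mulVec,
          dotProduct_neg, hc]
      have := congrArg Complex.re h2
      simp only [Complex.star_def, Complex.conj_re, Complex.neg_re] at this
      linarith
    have hsum : a = c - b := by
      have h0 : star x ⬝ᵥ ((1 : ℂ) • E - (J - R)) *ᵥ x = 0 := by rw [hMx, dotProduct_zero]
      simpa [Matrix.sub_mulVec, dotProduct_sub, ha, hb, hc, sub_add_eq_add_sub,
        sub_eq_iff_eq_add, smul_mulVec] using h0
    have hare' : 0 ≤ a.re ∧ a.im = 0 := by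
      have := hare; rw [Complex.le_def] at this; simpa using ⟨this.1, this.2.symm⟩
    have hbre' : 0 ≤ b.re ∧ b.im = 0 := by
      have := hbre; rw [Complex.le_def] at this; simpa using ⟨this.1, this.2.symm⟩
    have hsre := congrArg Complex.re hsum
    simp only [Complex.sub_re, hcim, zero_sub] at hsre
    have ha0 : a = 0 := by
      apply Complex.ext <;> simp [hare'.2] ; linarith [hare'.1, hbre'.1]
    have hb0 : b = 0 := by
      apply Complex.ext <;> simp [hbre'.2] ; linarith [hare'.1, hbre'.1]
    have hEx : E *ᵥ x = 0 := (hE.dotProduct_mulVec_zero_iff x).mp ha0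
    have hRx : R *ᵥ x = 0 := (hR.dotProduct_mulVec_zero_iff x).mp hb0
    have hJx : J *ᵥ x = 0 := by
      have := hMx
      rw [Matrix.sub_mulVec, Matrix.sub_mulVec, smul_mulVec, hEx, hRx] at this
      simpa using this
    exact ⟨x, hx, hEx, hJx, hRx⟩
end

section
/- Let (E,J,R) be a dH triple with R Hermitian positive definite. Then for every λ ∈ ℂ with Re(λ) ≥ 0 one has det(λE − (J − R)) ≠ 0. In particular the pencil λE − (J − R) is regular, J − R is invertible, and the pencil has no eigenvalues on the imaginary axis or in the closed right half-plane. -/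
open Matrix
open scoped ComplexOrder

/-- If `(E, J, R)` is a dH triple with `R` positive definite, then
`det(λE − (J − R)) ≠ 0` for all `λ` with `Re λ ≥ 0`; in particular the pencil is regular,
`J − R` is invertible, and there are no eigenvalues in the closed right half-plane. -/
theorem dH_posdef_R_stable {n : ℕ} (E J R : Matrix (Fin n) (Fin n) ℂ)
    (hE : E.PosSemidef) (hJ : Jᴴ = -J) (hR : R.PosDef) :
    (∀ lam : ℂ, 0 ≤ lam.re → Matrix.det (lam • E - (J - R)) ≠ 0) ∧
    (∃ μ : ℂ, Matrix.det (μ • E - (J - R)) ≠ 0) ∧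
    IsUnit (J - R) := by
  have main : ∀ lam : ℂ, 0 ≤ lam.re → Matrix.det (lam • E - (J - R)) ≠ 0 := by
    intro lam hlam hdet
    obtain ⟨v, hv, hmv⟩ := (Matrix.exists_mulVec_eq_zero_iff).2 hdet
    have h0 : star v ⬝ᵥ ((lam • E - (J - R)) *ᵥ v) = 0 := by rw [hmv]; simp
    have hexp : lam * (star v ⬝ᵥ E *ᵥ v) - (star v ⬝ᵥ J *ᵥ v) + (star v ⬝ᵥ R *ᵥ v) = 0 := by
      have : (lam • E - (J - R)) *ᵥ v = lam • (E *ᵥ v) - (J *ᵥ v - R *ᵥ v) := by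
        simp [Matrix.sub_mulVec, Matrix.smul_mulVec]
      rw [this] at h0
      simpa [dotProduct_sub, dotProduct_smul, smul_eq_mul, sub_add] using h0
    -- E term
    have hEv : 0 ≤ star v ⬝ᵥ E *ᵥ v := hE.dotProduct_mulVec_nonneg v
    have hEre : 0 ≤ (star v ⬝ᵥ E *ᵥ v).re := by
      rw [Complex.le_def] at hEv; simpa using hEv.1
    have hEim : (star v ⬝ᵥ E *ᵥ v).im = 0 := by
      rw [Complex.le_def] at hEv; simpa using hEv.2.symm
    -- R term
    have hRv : 0 < star v ⬝ᵥ R *ᵥ v := hR.dotProduct_mulVec_pos hv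
    have hRre : 0 < (star v ⬝ᵥ R *ᵥ v).re := by
      rw [Complex.lt_def] at hRv; simpa using hRv.1
    -- J term purely imaginary
    have hJre : (star v ⬝ᵥ J *ᵥ v).re = 0 := by
      have : star (star v ⬝ᵥ J *ᵥ v) = -(star v ⬝ᵥ J *ᵥ v) := by
        have key : star (star v ⬝ᵥ J *ᵥ v) = star v ⬝ᵥ Jᴴ *ᵥ v := by
          simp only [dotProduct, Matrix.mulVec, Matrix.conjTranspose_apply,
            star_sum, star_star, Finset.mul_sum, Finset.sum_mul]
          rw [Finset.sum_comm]
          refine Finset.sum_congr rfl fun i _ => Finset.sum_congr rfl fun j _ => by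
            simp only [StarMul.star_mul, Pi.star_apply, star_star]; ring
        rw [key, hJ, Matrix.neg_mulVec, dotProduct_neg]
      have := congrArg Complex.re this
      simp only [Complex.star_def, Complex.conj_re, Complex.neg_re] at this
      linarith
    -- take real part
    have hre := congrArg Complex.re hexp
    simp only [Complex.add_re, Complex.sub_re, Complex.mul_re, hEim, hJre, Complex.zero_re,
      mul_zero, sub_zero] at hre
    nlinarith [mul_nonneg hlam hEre]
  refine ⟨main, ⟨0, main 0 le_rfl⟩, ?_⟩
  have h0 := main 0 le_rfl
  have : (0 : ℂ) • E - (J - R) = -(J - R) := by simp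
  rw [this, Matrix.det_neg] at h0
  exact (Matrix.isUnit_iff_isUnit_det _).2 (isUnit_iff_ne_zero.2 fun h => h0 (by simp [h]))
end
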